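/- Traveling waves of the hyperbolic Allen–Cahn equation are stationary: under the stated hypotheses, the identity c ∫_ℝ g(Φ(ξ)) Φ'(ξ)² dξ = F(1) − F(−1) holds, and since F(1) = F(−1), g ≥ c_g > 0 and Φ is nonconstant, necessarily c = 0. -/

import Mathlib

open Filter MeasureTheory

/-- Traveling waves of the hyperbolic Allen–Cahn equation are stationary:
the identity `c ∫ g(Φ) Φ'² = F(1) − F(−1)` holds, and since `F(1) = F(−1)`,
`g ≥ c_g > 0` and `Φ` is nonconstant (it has limits `±1`), necessarily `c = 0`. -/
theorem traveling_waves_are_stationary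
    (F g Φ : ℝ → ℝ) (c_g ε τ c : ℝ)
    (hF : ContDiff ℝ 1 F) (hFeq : F 1 = F (-1))
    (hg : Continuous g) (hcg : 0 < c_g) (hgc : ∀ u : ℝ, c_g ≤ g u)
    (hε : 0 < ε) (hτ : 0 < τ)
    (hΦ : ContDiff ℝ 2 Φ)
    (heq : ∀ ξ : ℝ,
      (ε ^ 2 - c ^ 2 * τ) * deriv (deriv Φ) ξ + c * g (Φ ξ) * deriv Φ ξ
        - deriv F (Φ ξ) = 0)
    (hlim_top : Tendsto Φ atTop (nhds 1))
    (hlim_bot : Tendsto Φ atBot (nhds (-1)))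
    (hlim_top' : Tendsto (deriv Φ) atTop (nhds 0))
    (hlim_bot' : Tendsto (deriv Φ) atBot (nhds 0))
    (hint1 : Integrable (fun ξ : ℝ => (deriv Φ ξ) ^ 2))
    (hint2 : Integrable (fun ξ : ℝ => g (Φ ξ) * (deriv Φ ξ) ^ 2)) :
    c * (∫ ξ : ℝ, g (Φ ξ) * (deriv Φ ξ) ^ 2) = F 1 - F (-1) ∧ c = 0 := by
  have hΦd : Differentiable ℝ Φ := hΦ.differentiable (by norm_num)
  have hΦ'd : Differentiable ℝ (deriv Φ) :=
    (hΦ.iterate_deriv' 1 1).differentiable (by norm_num)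
  -- the energy function
  set H : ℝ → ℝ := fun x => (ε ^ 2 - c ^ 2 * τ) / 2 * (deriv Φ x) ^ 2 - F (Φ x) with hH
  have hderiv : ∀ x, HasDerivAt H (-(c * g (Φ x) * (deriv Φ x) ^ 2)) x := by
    intro x
    have h1 : HasDerivAt (deriv Φ) (deriv (deriv Φ) x) x := (hΦ'd x).hasDerivAt
    have h2 : HasDerivAt Φ (deriv Φ x) x := (hΦd x).hasDerivAt
    have h3 : HasDerivAt F (deriv F (Φ x)) (Φ x) :=
      ((hF.differentiable (by norm_num)) (Φ x)).hasDerivAt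
    have h4 : HasDerivAt (fun y => (ε ^ 2 - c ^ 2 * τ) / 2 * (deriv Φ y) ^ 2 - F (Φ y))
        ((ε ^ 2 - c ^ 2 * τ) / 2 * (2 * deriv Φ x ^ 1 * deriv (deriv Φ) x)
          - deriv F (Φ x) * deriv Φ x) x :=
      (((h1.pow 2).const_mul _).sub (h3.comp x h2))
    convert h4 using 1
    linear_combination (-(deriv Φ x)) * heq x
  have hint2' : Integrable (fun x : ℝ => -(c * g (Φ x) * (deriv Φ x) ^ 2)) := by
    have he : (fun x : ℝ => -(c * g (Φ x) * (deriv Φ x) ^ 2))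
        = fun x => (-c) * (g (Φ x) * (deriv Φ x) ^ 2) := by funext x; ring
    rw [he]; exact hint2.const_mul (-c)
  have hHtop : Tendsto H atTop (nhds ((ε ^ 2 - c ^ 2 * τ) / 2 * (0:ℝ) ^ 2 - F 1)) := by
    exact (((hlim_top'.pow 2).const_mul _).sub (hF.continuous.tendsto 1 |>.comp hlim_top))
  have hHbot : Tendsto H atBot (nhds ((ε ^ 2 - c ^ 2 * τ) / 2 * (0:ℝ) ^ 2 - F (-1))) := by
    exact (((hlim_bot'.pow 2).const_mul _).sub (hF.continuous.tendsto (-1) |>.comp hlim_bot))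
  have key : (∫ x : ℝ, -(c * g (Φ x) * (deriv Φ x) ^ 2))
      = ((ε ^ 2 - c ^ 2 * τ) / 2 * (0:ℝ) ^ 2 - F 1)
        - ((ε ^ 2 - c ^ 2 * τ) / 2 * (0:ℝ) ^ 2 - F (-1)) :=
    MeasureTheory.integral_of_hasDerivAt_of_tendsto hderiv hint2' hHbot hHtop
  have hmain : c * (∫ ξ : ℝ, g (Φ ξ) * (deriv Φ ξ) ^ 2) = F 1 - F (-1) := by
    have : (∫ x : ℝ, -(c * g (Φ x) * (deriv Φ x) ^ 2))
        = -(c * ∫ x : ℝ, g (Φ x) * (deriv Φ x) ^ 2) := by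
      rw [integral_neg]
      congr 1
      rw [← integral_const_mul]
      congr 1; ext x; ring
    rw [this] at key
    linarith
  refine ⟨hmain, ?_⟩
  by_contra hc
  have hI0 : (∫ ξ : ℝ, g (Φ ξ) * (deriv Φ ξ) ^ 2) = 0 := by
    have : c * (∫ ξ : ℝ, g (Φ ξ) * (deriv Φ ξ) ^ 2) = 0 := by rw [hmain, hFeq]; ring
    exact (mul_eq_zero.mp this).resolve_left hc
  -- the integrand is nonneg, integral zero, so it is a.e. zero; by continuity it's zero
  have hnonneg : ∀ x : ℝ, 0 ≤ g (Φ x) * (deriv Φ x) ^ 2 := fun x =>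
    mul_nonneg (le_trans hcg.le (hgc _)) (sq_nonneg _)
  have hae : (fun ξ : ℝ => g (Φ ξ) * (deriv Φ ξ) ^ 2) =ᵐ[volume] 0 :=
    (integral_eq_zero_iff_of_nonneg (fun x => hnonneg x) hint2).mp hI0
  have hcont : Continuous fun ξ : ℝ => g (Φ ξ) * (deriv Φ ξ) ^ 2 :=
    (hg.comp hΦ.continuous).mul ((hΦ'd.continuous).pow 2)
  have hzero : ∀ x : ℝ, g (Φ x) * (deriv Φ x) ^ 2 = 0 := by
    have := (Continuous.ae_eq_iff_eq volume hcont continuous_const).mp hae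
    intro x; exact congrFun this x
  have hΦ'0 : ∀ x : ℝ, deriv Φ x = 0 := by
    intro x
    have hgx : g (Φ x) ≠ 0 := ne_of_gt (lt_of_lt_of_le hcg (hgc _))
    have := hzero x
    have : (deriv Φ x) ^ 2 = 0 := by
      rcases mul_eq_zero.mp this with h | h
      · exact absurd h hgx
      · exact h
    exact pow_eq_zero_iff (by norm_num) |>.mp this
  have hconst : ∀ x : ℝ, Φ x = Φ 0 := by
    intro x
    exact is_const_of_deriv_eq_zero hΦd hΦ'0 x 0
  have h1 : Tendsto Φ atTop (nhds (Φ 0)) := by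
    have : Φ = fun _ => Φ 0 := funext hconst
    rw [this]; exact tendsto_const_nhds
  have h2 : Tendsto Φ atBot (nhds (Φ 0)) := by
    have : Φ = fun _ => Φ 0 := funext hconst
    rw [this]; exact tendsto_const_nhds
  have e1 : Φ 0 = 1 := tendsto_nhds_unique h1 hlim_top
  have e2 : Φ 0 = -1 := tendsto_nhds_unique h2 hlim_bot
  linarith [e1, e2]
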